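/- Let S be a monoid and let A be an S-act. Then A is cancellable if and only if A is internally cancellable. -/

import Mathlib

universe u v w

/-- A right `S`-act structure on a type `A`: a map `A × S → A`, `(a, s) ↦ a · s`,
with `a · 1 = a` and `a · (s*t) = (a · s) · t`. (`S`-acts are additionally required
to be nonempty; this is imposed via `Nonempty` hypotheses.) -/
class RAct (S : Type u) [Monoid S] (A : Type v) : Type (max u v) where
  act : A → S → A
  act_one : ∀ a : A, act a 1 = a
  act_mul : ∀ (a : A) (s t : S), act a (s * t) = act (act a s) t

/-- Isomorphism of `S`-acts: a bijective action-preserving map. -/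
def ActIso (S : Type u) [Monoid S] (A : Type v) (B : Type w) [RAct S A] [RAct S B] : Prop :=
  ∃ e : A ≃ B, ∀ (a : A) (s : S), e (RAct.act a s) = RAct.act (e a) s

/-- The coproduct (disjoint union) of two `S`-acts, with componentwise action. -/
instance sumRAct (S : Type u) [Monoid S] (A : Type v) (B : Type w) [RAct S A] [RAct S B] :
    RAct S (A ⊕ B) where
  act x s := Sum.map (fun a => RAct.act a s) (fun b => RAct.act b s) x
  act_one := by rintro (a | b) <;> simp [RAct.act_one]
  act_mul := by rintro (a | b) s t <;> simp [RAct.act_mul]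

/-- An `S`-act `A` is cancellable if `A ⊔ B ≅ A ⊔ C` implies `B ≅ C`
for all `S`-acts `B`, `C`. -/
def Cancellable (S : Type u) [Monoid S] (A : Type u) [RAct S A] : Prop :=
  ∀ (B C : Type u) [RAct S B] [RAct S C] [Nonempty B] [Nonempty C],
    ActIso S (A ⊕ B) (A ⊕ C) → ActIso S B C

/-- A subact of an `S`-act: a nonempty subset closed under the action. -/
def IsSubact (S : Type u) [Monoid S] {A : Type v} [RAct S A] (T : Set A) : Prop :=
  T.Nonempty ∧ ∀ a ∈ T, ∀ s : S, RAct.act a s ∈ T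

/-- The induced `S`-act structure on a subact. -/
def IsSubact.ract {S : Type u} [Monoid S] {A : Type v} [RAct S A] {T : Set A}
    (hT : IsSubact S T) : RAct S T where
  act a s := ⟨RAct.act a.1 s, hT.2 a.1 a.2 s⟩
  act_one a := Subtype.ext (RAct.act_one a.1)
  act_mul a s t := Subtype.ext (RAct.act_mul a.1 s t)

/-- Two subacts are isomorphic if they are isomorphic as `S`-acts with the
induced actions. -/
def SubactIso {S : Type u} [Monoid S] {A : Type v} {A' : Type w} [RAct S A] [RAct S A']
    {T : Set A} {U : Set A'} (hT : IsSubact S T) (hU : IsSubact S U) : Prop :=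
  @ActIso S _ T U hT.ract hU.ract

/-- An `S`-act `A` is internally cancellable if whenever `A = C ⊔ D = E ⊔ F` for
subacts `C, D, E, F` with `C ≅ E`, it follows that `D ≅ F`. -/
def InternallyCancellable (S : Type u) [Monoid S] (A : Type u) [RAct S A] : Prop :=
  ∀ (C D E F : Set A) (hC : IsSubact S C) (hD : IsSubact S D)
    (hE : IsSubact S E) (hF : IsSubact S F),
    C ∪ D = Set.univ → C ∩ D = ∅ → E ∪ F = Set.univ → E ∩ F = ∅ →
    SubactIso hC hE → SubactIso hD hF

namespace CancelAux

open Relation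

variable {S : Type u} [Monoid S]

section Conn
variable {A : Type v} [RAct S A]

/-- Elementary connectedness relation on an act. -/
def arel (S : Type u) [Monoid S] {A : Type v} [RAct S A] (x y : A) : Prop :=
  ∃ s t : S, RAct.act x s = RAct.act y t

theorem arel_symm {x y : A} (h : arel S x y) : arel S y x := by
  obtain ⟨s, t, h⟩ := h; exact ⟨t, s, h.symm⟩

/-- Connectedness: equivalence closure of `arel`. -/
def conn (S : Type u) [Monoid S] {A : Type v} [RAct S A] (x y : A) : Prop :=
  EqvGen (arel S) x y

theorem conn_refl (x : A) : conn S x x := EqvGen.refl x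
theorem conn_symm {x y : A} (h : conn S x y) : conn S y x := EqvGen.symm _ _ h
theorem conn_trans {x y z : A} (h : conn S x y) (h' : conn S y z) : conn S x z :=
  EqvGen.trans _ _ _ h h'

theorem conn_act (x : A) (s : S) : conn S x (RAct.act x s) :=
  EqvGen.rel _ _ ⟨s, 1, (RAct.act_one _).symm⟩

/-- A partition of an act into two closed sets is respected by connectedness. -/
theorem conn_mem_iff {U V : Set A}
    (hU : ∀ a ∈ U, ∀ s : S, RAct.act a s ∈ U)
    (hV : ∀ a ∈ V, ∀ s : S, RAct.act a s ∈ V)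
    (hcov : ∀ a : A, a ∈ U ∨ a ∈ V)
    (hdis : ∀ a : A, a ∈ U → a ∈ V → False)
    {x y : A} (h : conn S x y) : x ∈ U ↔ y ∈ U := by
  have key : ∀ x y : A, arel S x y → x ∈ U → y ∈ U := by
    rintro x y ⟨s, t, hst⟩ hx
    rcases hcov y with hy | hy
    · exact hy
    · exact absurd (hst ▸ hU x hx s) (fun hyt => hdis _ hyt (hV y hy t))
  induction h with
  | rel a b hab => exact ⟨key a b hab, key b a (arel_symm hab)⟩
  | refl a => exact Iff.rfl
  | symm a b _ ih => exact ih.symm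
  | trans a b c _ _ ih1 ih2 => exact ih1.trans ih2

theorem conn_map {A' : Type w} [RAct S A'] {φ : A → A'}
    (hφ : ∀ (a : A) (s : S), φ (RAct.act a s) = RAct.act (φ a) s) {x y : A} (h : conn S x y) :
    conn S (φ x) (φ y) := by
  induction h with
  | rel a b hab =>
      obtain ⟨s, t, h⟩ := hab
      exact EqvGen.rel (r := arel S) _ _ ⟨s, t, by rw [← hφ, ← hφ, h]⟩
  | refl a => exact conn_refl _
  | symm _ _ _ ih => exact conn_symm ih
  | trans _ _ _ _ _ ih1 ih2 => exact conn_trans ih1 ih2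

theorem conn_lift {φ : A → A} (hinj : Function.Injective φ)
    (hφ : ∀ (a : A) (s : S), φ (RAct.act a s) = RAct.act (φ a) s)
    (hcl : ∀ a : A, a ∉ Set.range φ → ∀ s : S, RAct.act a s ∉ Set.range φ)
    {u v : A} (h : conn S u v) :
    (∀ x, φ x = u → ∃ y, φ y = v ∧ conn S x y) ∧
    (∀ y, φ y = v → ∃ x, φ x = u ∧ conn S y x) := by
  have hrange : ∀ a ∈ Set.range φ, ∀ s : S, RAct.act a s ∈ Set.range φ := by
    rintro a ⟨x, rfl⟩ s; exact ⟨RAct.act x s, hφ x s⟩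
  have key : ∀ u v : A, arel S u v → ∀ x, φ x = u → ∃ y, φ y = v ∧ conn S x y := by
    rintro u v huv x rfl
    have hv : v ∈ Set.range φ := by
      have := conn_mem_iff (U := Set.range φ) (V := (Set.range φ)ᶜ) hrange
        (fun a ha s => hcl a ha s) (fun a => em _) (fun a h1 h2 => h2 h1)
        (EqvGen.rel _ _ huv)
      exact this.mp ⟨x, rfl⟩
    obtain ⟨y, rfl⟩ := hv
    obtain ⟨s, t, h⟩ := huv
    rw [← hφ, ← hφ] at h
    exact ⟨y, rfl, EqvGen.rel (r := arel S) _ _ ⟨s, t, hinj h⟩⟩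
  induction h with
  | rel a b hab => exact ⟨key a b hab, key b a (arel_symm hab)⟩
  | refl a => exact ⟨fun x hx => ⟨x, hx, conn_refl x⟩, fun x hx => ⟨x, hx, conn_refl x⟩⟩
  | symm a b _ ih => exact ⟨ih.2, ih.1⟩
  | trans a b c _ _ ih1 ih2 =>
      constructor
      · intro x hx
        obtain ⟨y, hy, hxy⟩ := ih1.1 x hx
        obtain ⟨z, hz, hyz⟩ := ih2.1 y hy
        exact ⟨z, hz, conn_trans hxy hyz⟩
      · intro z hz
        obtain ⟨y, hy, hzy⟩ := ih2.2 z hz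
        obtain ⟨x, hx, hyx⟩ := ih1.2 y hy
        exact ⟨x, hx, conn_trans hzy hyx⟩

end Conn

end CancelAux
namespace CancelAux
open Relation

section L
variable {S : Type u} [Monoid S] {A : Type u} [RAct S A]

/-- An internally cancellable act admits no equivariant self-injection whose
range has a nonempty closed complement. -/
theorem no_self_embedding (hIC : InternallyCancellable S A)
    {φ : A → A} (hinj : Function.Injective φ)
    (hφ : ∀ (a : A) (s : S), φ (RAct.act a s) = RAct.act (φ a) s)
    (hcl : ∀ a : A, a ∉ Set.range φ → ∀ s : S, RAct.act a s ∉ Set.range φ)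
    {f0 : A} (hf0 : f0 ∉ Set.range φ) : False := by
  classical
  set a : ℕ → A := fun n => φ^[n] f0 with ha
  set K : ℕ → Set A := fun n => {x | conn S (a n) x} with hKdef
  have haS : ∀ n, a (n + 1) = φ (a n) := by
    intro n; simp only [ha, Function.iterate_succ_apply']
  have hKmem : ∀ n, a n ∈ K n := fun n => conn_refl (a n)
  have hKsat : ∀ n, ∀ x ∈ K n, ∀ y, conn S x y → y ∈ K n :=
    fun n x hx y hxy => conn_trans hx hxy
  have hKcl : ∀ n, ∀ x ∈ K n, ∀ s : S, RAct.act x s ∈ K n :=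
    fun n x hx s => hKsat n x hx _ (conn_act x s)
  have hKcompl : ∀ n, ∀ x, x ∉ K n → ∀ s : S, RAct.act x s ∉ K n := by
    intro n x hx s hxs
    exact hx (hKsat n _ hxs x (conn_symm (conn_act x s)))
  have hKsucc : ∀ n, K (n + 1) = φ '' K n := by
    intro n
    ext x
    constructor
    · intro hx
      have hx' : conn S (φ (a n)) x := by rwa [← haS n]
      obtain ⟨y, hy, hconn⟩ := (conn_lift hinj hφ hcl hx').1 (a n) rfl
      exact ⟨y, hconn, hy⟩
    · rintro ⟨y, hy, rfl⟩
      have : conn S (φ (a n)) (φ y) := conn_map hφ hy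
      rwa [← haS n] at this
  have hKrange : ∀ n, (∀ x ∈ K n, x ∈ Set.range (φ^[n])) ∧
      (∀ x ∈ K n, x ∉ Set.range (φ^[n + 1])) := by
    intro n
    induction n with
    | zero =>
        constructor
        · intro x _; exact ⟨x, rfl⟩
        · intro x hx hmem
          have hx' : x ∉ Set.range φ := by
            have hiff := conn_mem_iff (U := Set.range φ) (V := (Set.range φ)ᶜ)
              (by rintro b ⟨z, rfl⟩ s; exact ⟨RAct.act z s, hφ z s⟩)
              (fun b hb s => hcl b hb s) (fun b => em _) (fun b h1 h2 => h2 h1) hx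
            intro hc
            exact hf0 (hiff.mpr hc)
          obtain ⟨w, hw⟩ := hmem
          rw [Function.iterate_succ_apply'] at hw
          exact hx' ⟨_, hw⟩
    | succ n ih =>
        constructor
        · intro x hx
          rw [hKsucc n] at hx
          obtain ⟨y, hy, rfl⟩ := hx
          obtain ⟨z, rfl⟩ := ih.1 y hy
          exact ⟨z, Function.iterate_succ_apply' φ n z⟩
        · intro x hx hmem
          rw [hKsucc n] at hx
          obtain ⟨y, hy, rfl⟩ := hx
          obtain ⟨w, hw⟩ := hmem
          rw [Function.iterate_succ_apply' φ (n + 1) w] at hw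
          exact ih.2 y hy ⟨w, hinj hw⟩
  have hKdisj : ∀ m n, m < n → ∀ x, x ∈ K m → x ∈ K n → False := by
    intro m n hmn x hxm hxn
    obtain ⟨k, rfl⟩ := Nat.exists_eq_add_of_lt hmn
    obtain ⟨z, rfl⟩ := (hKrange (m + k + 1)).1 x hxn
    apply (hKrange m).2 _ hxm
    refine ⟨φ^[k] z, ?_⟩
    rw [← Function.iterate_add_apply]
    congr 1
    omega
  -- the shift set
  set W : Set A := {x | ∃ n, x ∈ K (n + 1)} with hWdef
  have hWcl : ∀ x ∈ W, ∀ s : S, RAct.act x s ∈ W := by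
    rintro x ⟨n, hn⟩ s; exact ⟨n, hKcl _ _ hn s⟩
  have hWcompl : ∀ x, x ∉ W → ∀ s : S, RAct.act x s ∉ W := by
    rintro x hx s ⟨n, hn⟩
    exact hx ⟨n, hKsat _ _ hn x (conn_symm (conn_act x s))⟩
  have hφW : ∀ x ∈ W, φ x ∈ W ∧ φ x ∉ K 0 ∧ φ x ∉ K 1 := by
    rintro x ⟨n, hn⟩
    have hx2 : φ x ∈ K (n + 2) := by rw [hKsucc (n + 1)]; exact ⟨x, hn, rfl⟩
    refine ⟨⟨n + 1, hx2⟩, fun h0 => hKdisj 0 (n + 2) (by omega) _ h0 hx2,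
      fun h1 => hKdisj 1 (n + 2) (by omega) _ h1 hx2⟩
  set θ : A → A := fun x => if x ∈ W then φ x else x with hθdef
  have hθ_in : ∀ x ∈ W, θ x = φ x := fun x hx => if_pos hx
  have hθ_out : ∀ x, x ∉ W → θ x = x := fun x hx => if_neg hx
  -- subacts
  have hsubD : IsSubact S (K 0) := ⟨⟨a 0, hKmem 0⟩, hKcl 0⟩
  have hsubC : IsSubact S (K 0)ᶜ :=
    ⟨⟨a 1, fun h => hKdisj 0 1 (by omega) _ h (hKmem 1)⟩, fun x hx s => hKcompl 0 x hx s⟩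
  have hsubF : IsSubact S (K 0 ∪ K 1) := by
    refine ⟨⟨a 0, Or.inl (hKmem 0)⟩, ?_⟩
    rintro x (hx | hx) s
    · exact Or.inl (hKcl 0 x hx s)
    · exact Or.inr (hKcl 1 x hx s)
  have hsubE : IsSubact S (K 0 ∪ K 1)ᶜ := by
    refine ⟨⟨a 2, ?_⟩, ?_⟩
    · rintro (h | h)
      · exact hKdisj 0 2 (by omega) _ h (hKmem 2)
      · exact hKdisj 1 2 (by omega) _ h (hKmem 2)
    · intro x hx s hxs
      rcases hxs with h | h
      · exact hx (Or.inl (hKsat 0 _ h x (conn_symm (conn_act x s))))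
      · exact hx (Or.inr (hKsat 1 _ h x (conn_symm (conn_act x s))))
  -- θ restricts to a bijection (K 0)ᶜ → (K 0 ∪ K 1)ᶜ
  have hθmaps : ∀ x, x ∉ K 0 → θ x ∉ K 0 ∪ K 1 := by
    intro x hx
    by_cases hw : x ∈ W
    · rw [hθ_in x hw]
      rintro (h | h)
      · exact (hφW x hw).2.1 h
      · exact (hφW x hw).2.2 h
    · rw [hθ_out x hw]
      rintro (h | h)
      · exact hx h
      · exact hw ⟨0, h⟩
  have hθinj : Function.Injective θ := by
    intro x y hxy
    by_cases hx : x ∈ W <;> by_cases hy : y ∈ W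
    · rw [hθ_in x hx, hθ_in y hy] at hxy; exact hinj hxy
    · rw [hθ_in x hx, hθ_out y hy] at hxy
      exact absurd ((hxy ▸ (hφW x hx).1 : y ∈ W)) hy
    · rw [hθ_out x hx, hθ_in y hy] at hxy
      exact absurd ((hxy ▸ (hφW y hy).1 : x ∈ W)) hx
    · rw [hθ_out x hx, hθ_out y hy] at hxy; exact hxy
  have hθsurj : ∀ y, y ∉ K 0 ∪ K 1 → ∃ x, x ∉ K 0 ∧ θ x = y := by
    intro y hy
    by_cases hw : y ∈ W
    · obtain ⟨n, hn⟩ := hw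
      have hn1 : ¬ n = 0 := by
        rintro rfl; exact hy (Or.inr hn)
      obtain ⟨m, rfl⟩ : ∃ m, n = m + 1 := ⟨n - 1, by omega⟩
      rw [hKsucc (m + 1)] at hn
      obtain ⟨x, hx, rfl⟩ := hn
      have hxW : x ∈ W := ⟨m, hx⟩
      refine ⟨x, fun h0 => hKdisj 0 (m + 1) (by omega) _ h0 hx, hθ_in x hxW⟩
    · refine ⟨y, fun h0 => hy (Or.inl h0), hθ_out y hw⟩
  have hθact : ∀ (x : A) (s : S), θ (RAct.act x s) = RAct.act (θ x) s := by
    intro x s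
    by_cases hw : x ∈ W
    · rw [hθ_in x hw, hθ_in _ (hWcl x hw s), hφ]
    · rw [hθ_out x hw, hθ_out _ (hWcompl x hw s)]
  -- build the subact iso  (K 0)ᶜ ≅ (K 0 ∪ K 1)ᶜ
  have hCE : SubactIso hsubC hsubE := by
    refine ⟨Equiv.ofBijective (fun x : ((K 0)ᶜ : Set A) =>
      (⟨θ x.1, hθmaps x.1 x.2⟩ : ((K 0 ∪ K 1)ᶜ : Set A))) ⟨?_, ?_⟩, ?_⟩
    · intro x y hxy
      exact Subtype.ext (hθinj (congrArg Subtype.val hxy))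
    · intro y
      obtain ⟨x, hx, hθx⟩ := hθsurj y.1 y.2
      exact ⟨⟨x, hx⟩, Subtype.ext hθx⟩
    · intro x s
      apply Subtype.ext
      exact hθact x.1 s
  -- internal cancellability
  have hDF : SubactIso hsubD hsubF :=
    hIC _ _ _ _ hsubC hsubD hsubE hsubF
      (Set.compl_union_self _) (Set.compl_inter_self _)
      (Set.compl_union_self _) (Set.compl_inter_self _) hCE
  obtain ⟨ψ, hψ⟩ := hDF
  -- transport the decomposition of K 0 ∪ K 1 back into K 0, contradicting connectedness
  set U : Set A := {x | ∃ h : x ∈ K 0, (ψ ⟨x, h⟩).1 ∈ K 0} with hUdef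
  set Q : Set A := {x | ∃ h : x ∈ K 0, (ψ ⟨x, h⟩).1 ∈ K 1} with hQdef
  set P : Set A := (K 0)ᶜ ∪ U with hPdef
  have hψact : ∀ (x : A) (h : x ∈ K 0) (s : S),
      (ψ ⟨RAct.act x s, hKcl 0 x h s⟩).1 = RAct.act (ψ ⟨x, h⟩).1 s := by
    intro x h s
    have := hψ ⟨x, h⟩ s
    exact congrArg Subtype.val this
  have hPcl : ∀ x ∈ P, ∀ s : S, RAct.act x s ∈ P := by
    rintro x (hx | hx) s
    · exact Or.inl (hKcompl 0 x hx s)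
    · obtain ⟨h, hval⟩ := hx
      refine Or.inr ⟨hKcl 0 x h s, ?_⟩
      rw [hψact x h s]
      exact hKcl 0 _ hval s
  have hQcl : ∀ x ∈ Q, ∀ s : S, RAct.act x s ∈ Q := by
    rintro x ⟨h, hval⟩ s
    refine ⟨hKcl 0 x h s, ?_⟩
    rw [hψact x h s]
    exact hKcl 1 _ hval s
  have hcov : ∀ x : A, x ∈ P ∨ x ∈ Q := by
    intro x
    by_cases h : x ∈ K 0
    · rcases (ψ ⟨x, h⟩).2 with hv | hv
      · exact Or.inl (Or.inr ⟨h, hv⟩)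
      · exact Or.inr ⟨h, hv⟩
    · exact Or.inl (Or.inl h)
  have hdis : ∀ x : A, x ∈ P → x ∈ Q → False := by
    rintro x hP ⟨h, hval⟩
    rcases hP with hx | ⟨h', hval'⟩
    · exact hx h
    · exact hKdisj 0 1 (by omega) _ hval' hval
  -- the two witnesses
  set u : (K 0 : Set A) := ψ.symm ⟨a 0, Or.inl (hKmem 0)⟩ with hu
  set v : (K 0 : Set A) := ψ.symm ⟨a 1, Or.inr (hKmem 1)⟩ with hv
  have huP : u.1 ∈ P := by
    refine Or.inr ⟨u.2, ?_⟩
    have : ψ ⟨u.1, u.2⟩ = ⟨a 0, Or.inl (hKmem 0)⟩ := by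
      rw [show (⟨u.1, u.2⟩ : (K 0 : Set A)) = u from rfl, hu, Equiv.apply_symm_apply]
    rw [this]
    exact hKmem 0
  have hvQ : v.1 ∈ Q := by
    refine ⟨v.2, ?_⟩
    have : ψ ⟨v.1, v.2⟩ = ⟨a 1, Or.inr (hKmem 1)⟩ := by
      rw [show (⟨v.1, v.2⟩ : (K 0 : Set A)) = v from rfl, hv, Equiv.apply_symm_apply]
    rw [this]
    exact hKmem 1
  have hconnuv : conn S u.1 v.1 := conn_trans (conn_symm u.2) v.2
  have := (conn_mem_iff (U := P) (V := Q) hPcl hQcl hcov hdis hconnuv).mp huP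
  exact hdis v.1 this hvQ

end L
end CancelAux
namespace CancelAux

section Traj
variable {S : Type u} [Monoid S] {A B C : Type u} [RAct S A] [RAct S B] [RAct S C]

theorem act_inl (a : A) (s : S) :
    RAct.act (Sum.inl a : A ⊕ B) s = Sum.inl (RAct.act a s) := rfl

theorem act_inr (b : B) (s : S) :
    RAct.act (Sum.inr b : A ⊕ B) s = Sum.inr (RAct.act b s) := rfl

/-- One step of the trajectory dynamics on `A ⊕ C`. -/
def stp (e : A ⊕ B ≃ A ⊕ C) : A ⊕ C → A ⊕ C :=
  Sum.elim (fun a => e (Sum.inl a)) Sum.inr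

theorem stp_inl (e : A ⊕ B ≃ A ⊕ C) (a : A) : stp e (Sum.inl a) = e (Sum.inl a) := rfl

theorem stp_inr (e : A ⊕ B ≃ A ⊕ C) (c : C) : stp e (Sum.inr c) = Sum.inr c := rfl

theorem stp_iter_inr (e : A ⊕ B ≃ A ⊕ C) (n : ℕ) (c : C) :
    (stp e)^[n] (Sum.inr c) = Sum.inr c := by
  induction n with
  | zero => rfl
  | succ n ih => rw [Function.iterate_succ_apply, stp_inr, ih]

theorem stp_act (e : A ⊕ B ≃ A ⊕ C)
    (he : ∀ (x : A ⊕ B) (s : S), e (RAct.act x s) = RAct.act (e x) s)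
    (x : A ⊕ C) (s : S) : stp e (RAct.act x s) = RAct.act (stp e x) s := by
  cases x with
  | inl a =>
      show e (Sum.inl (RAct.act a s)) = RAct.act (e (Sum.inl a)) s
      rw [← act_inl (B := B), he]
  | inr c => rfl

theorem stp_iter_act (e : A ⊕ B ≃ A ⊕ C)
    (he : ∀ (x : A ⊕ B) (s : S), e (RAct.act x s) = RAct.act (e x) s)
    (n : ℕ) (x : A ⊕ C) (s : S) :
    (stp e)^[n] (RAct.act x s) = RAct.act ((stp e)^[n] x) s := by
  induction n generalizing x with
  | zero => rfl
  | succ n ih =>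
      rw [Function.iterate_succ_apply, Function.iterate_succ_apply, stp_act e he, ih]

theorem isLeft_act (x : A ⊕ C) (s : S) : (RAct.act x s).isLeft = x.isLeft := by
  cases x <;> rfl

theorem isRight_act (x : A ⊕ C) (s : S) : (RAct.act x s).isRight = x.isRight := by
  cases x <;> rfl

/-- The elements of `A` whose forward trajectory stays in `A` forever. -/
def InfSet (e : A ⊕ B ≃ A ⊕ C) : Set A :=
  {a | ∀ n : ℕ, ((stp e)^[n] (Sum.inl a)).isLeft}

theorem infSet_act (e : A ⊕ B ≃ A ⊕ C)
    (he : ∀ (x : A ⊕ B) (s : S), e (RAct.act x s) = RAct.act (e x) s)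
    (a : A) (s : S) : a ∈ InfSet e ↔ RAct.act a s ∈ InfSet e := by
  have key : ∀ n : ℕ, ((stp e)^[n] (Sum.inl (RAct.act a s))).isLeft
      = ((stp e)^[n] (Sum.inl a)).isLeft := by
    intro n
    rw [← act_inl (B := C), stp_iter_act e he, isLeft_act]
  constructor
  · intro h n; rw [key n]; exact h n
  · intro h n; rw [← key n]; exact h n

theorem infSet_next (e : A ⊕ B ≃ A ⊕ C) {a : A} (ha : a ∈ InfSet e) :
    ∃ y, e (Sum.inl a) = Sum.inl y ∧ y ∈ InfSet e := by
  have h1 := ha 1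
  rw [Function.iterate_one, stp_inl] at h1
  obtain ⟨y, hy⟩ := Sum.isLeft_iff.mp h1
  refine ⟨y, hy, fun n => ?_⟩
  have : Sum.inl y = stp e (Sum.inl a) := by rw [stp_inl, hy]
  rw [this, ← Function.iterate_succ_apply]
  exact ha (n + 1)

/-- If the act `A` is internally cancellable, no trajectory coming from `B`
can stay in `A` forever. -/
theorem no_escape (hIC : InternallyCancellable S A)
    (e : A ⊕ B ≃ A ⊕ C)
    (he : ∀ (x : A ⊕ B) (s : S), e (RAct.act x s) = RAct.act (e x) s)
    (b : B) (a0 : A) (hba : e (Sum.inr b) = Sum.inl a0) (hInf : a0 ∈ InfSet e) :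
    False := by
  classical
  set φ : A → A := fun a =>
    if h : a ∈ InfSet e then Sum.elim id (fun _ => a) (e (Sum.inl a)) else a with hφdef
  have hφ_in : ∀ a ∈ InfSet e, ∃ y, e (Sum.inl a) = Sum.inl y ∧ φ a = y ∧ y ∈ InfSet e := by
    intro a ha
    obtain ⟨y, hy, hyInf⟩ := infSet_next e ha
    refine ⟨y, hy, ?_, hyInf⟩
    simp only [hφdef, dif_pos ha, hy, Sum.elim_inl, id]
  have hφ_out : ∀ a, a ∉ InfSet e → φ a = a := fun a ha => dif_neg ha
  -- equivariance
  have hφact : ∀ (a : A) (s : S), φ (RAct.act a s) = RAct.act (φ a) s := by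
    intro a s
    by_cases ha : a ∈ InfSet e
    · obtain ⟨y, hy, hval, _⟩ := hφ_in a ha
      have has : RAct.act a s ∈ InfSet e := (infSet_act e he a s).mp ha
      obtain ⟨y', hy', hval', _⟩ := hφ_in _ has
      rw [hval, hval']
      have : e (Sum.inl (RAct.act a s)) = Sum.inl (RAct.act y s) := by
        rw [← act_inl (B := B), he, hy, act_inl]
      rw [this] at hy'
      exact (Sum.inl.inj hy').symm
    · have has : RAct.act a s ∉ InfSet e := fun h => ha ((infSet_act e he a s).mpr h)
      rw [hφ_out a ha, hφ_out _ has]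
  -- injectivity
  have hφInf : ∀ a ∈ InfSet e, φ a ∈ InfSet e := by
    intro a ha; obtain ⟨y, _, hval, hyInf⟩ := hφ_in a ha; rw [hval]; exact hyInf
  have hφinj : Function.Injective φ := by
    intro x y hxy
    by_cases hx : x ∈ InfSet e <;> by_cases hy : y ∈ InfSet e
    · obtain ⟨x', hex, hvx, _⟩ := hφ_in x hx
      obtain ⟨y', hey, hvy, _⟩ := hφ_in y hy
      rw [hvx, hvy] at hxy
      subst hxy
      exact Sum.inl.inj (e.injective (hex.trans hey.symm))
    · rw [hφ_out y hy] at hxy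
      exact absurd (hxy ▸ hφInf x hx) hy
    · rw [hφ_out x hx] at hxy
      exact absurd (hxy.symm ▸ hφInf y hy) hx
    · rw [hφ_out x hx, hφ_out y hy] at hxy; exact hxy
  -- range description
  set F : Set A := {x | x ∈ InfSet e ∧ ∃ b' : B, e (Sum.inr b') = Sum.inl x} with hFdef
  have hrange : ∀ x : A, x ∈ Set.range φ ↔ x ∉ F := by
    intro x
    constructor
    · rintro ⟨z, rfl⟩ ⟨hxInf, b', hb'⟩
      by_cases hz : z ∈ InfSet e
      · obtain ⟨y, hey, hval, _⟩ := hφ_in z hz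
        rw [hval] at hb'
        exact Sum.inl_ne_inr (e.injective (hey.trans hb'.symm))
      · rw [hφ_out z hz] at hxInf; exact hz hxInf
    · intro hx
      by_cases hxi : x ∈ InfSet e
      · rcases hsym : e.symm (Sum.inl x) with a' | b'
        · have hea' : e (Sum.inl a') = Sum.inl x := by
            rw [← hsym, Equiv.apply_symm_apply]
          have ha'Inf : a' ∈ InfSet e := by
            intro n
            cases n with
            | zero => rfl
            | succ n =>
                rw [Function.iterate_succ_apply, stp_inl, hea']
                exact hxi n
          obtain ⟨y, hey, hval, _⟩ := hφ_in a' ha'Inf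
          exact ⟨a', by rw [hval]; exact Sum.inl.inj (hey.symm.trans hea')⟩
        · exact absurd ⟨hxi, b', by rw [← hsym, Equiv.apply_symm_apply]⟩ hx
      · exact ⟨x, hφ_out x hxi⟩
  have hcl : ∀ x : A, x ∉ Set.range φ → ∀ s : S, RAct.act x s ∉ Set.range φ := by
    intro x hx s hmem
    have hxF : x ∈ F := by
      by_contra h
      exact hx ((hrange x).mpr h)
    obtain ⟨hxInf, b', hb'⟩ := hxF
    have hsF : RAct.act x s ∈ F := by
      refine ⟨(infSet_act e he x s).mp hxInf, RAct.act b' s, ?_⟩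
      rw [← act_inr (A := A), he, hb', act_inl]
    exact ((hrange _).mp hmem) hsF
  have hf0 : a0 ∉ Set.range φ := fun h => (hrange a0).mp h ⟨hInf, b, hba⟩
  exact no_self_embedding hIC hφinj hφact hcl hf0

end Traj
end CancelAux
namespace CancelAux

section Pong
variable {S : Type u} [Monoid S] {A B C : Type u} [RAct S A] [RAct S B] [RAct S C]

theorem symm_equivariant {X Y : Type v} [RAct S X] [RAct S Y] (e : X ≃ Y)
    (he : ∀ (x : X) (s : S), e (RAct.act x s) = RAct.act (e x) s) :
    ∀ (y : Y) (s : S), e.symm (RAct.act y s) = RAct.act (e.symm y) s := by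
  intro y s
  apply e.injective
  rw [Equiv.apply_symm_apply, he, Equiv.apply_symm_apply]

theorem chainRevA (e : A ⊕ B ≃ A ⊕ C) :
    ∀ (n : ℕ) (a : A) (c : C),
      (∀ k, k ≤ n → ((stp e)^[k] (Sum.inl a)).isLeft) →
      (stp e)^[n + 1] (Sum.inl a) = Sum.inr c →
      (stp e.symm)^[n] (e.symm (Sum.inr c)) = Sum.inl a ∧
        ∀ k, k < n → ((stp e.symm)^[k] (e.symm (Sum.inr c))).isLeft := by
  intro n
  induction n with
  | zero =>
      intro a c _ hhit
      rw [Function.iterate_one, stp_inl] at hhit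
      refine ⟨?_, fun k hk => absurd hk (Nat.not_lt_zero k)⟩
      show e.symm (Sum.inr c) = Sum.inl a
      rw [← hhit, Equiv.symm_apply_apply]
  | succ n ih =>
      intro a c hleft hhit
      have h1 : ((stp e)^[1] (Sum.inl a)).isLeft := hleft 1 (by omega)
      rw [Function.iterate_one, stp_inl] at h1
      obtain ⟨a1, ha1⟩ := Sum.isLeft_iff.mp h1
      have hstep : stp e (Sum.inl a) = Sum.inl a1 := by rw [stp_inl, ha1]
      have hleft' : ∀ k, k ≤ n → ((stp e)^[k] (Sum.inl a1)).isLeft := by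
        intro k hk
        rw [← hstep, ← Function.iterate_succ_apply]
        exact hleft (k + 1) (by omega)
      have hhit' : (stp e)^[n + 1] (Sum.inl a1) = Sum.inr c := by
        rw [← hstep, ← Function.iterate_succ_apply]
        exact hhit
      obtain ⟨hback, hbleft⟩ := ih a1 c hleft' hhit'
      constructor
      · rw [Function.iterate_succ_apply', hback]
        show e.symm (Sum.inl a1) = Sum.inl a
        rw [← ha1, Equiv.symm_apply_apply]
      · intro k hk
        rcases Nat.lt_or_ge k n with h | h
        · exact hbleft k h
        · have hkn : k = n := by omega
          subst hkn
          rw [hback]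
          rfl

theorem chainRev (e : A ⊕ B ≃ A ⊕ C) (n : ℕ) (b : B) (c : C)
    (hleft : ∀ k, k < n → ((stp e)^[k] (e (Sum.inr b))).isLeft)
    (hhit : (stp e)^[n] (e (Sum.inr b)) = Sum.inr c) :
    (∀ k, k < n → ((stp e.symm)^[k] (e.symm (Sum.inr c))).isLeft) ∧
      (stp e.symm)^[n] (e.symm (Sum.inr c)) = Sum.inr b := by
  cases n with
  | zero =>
      refine ⟨fun k hk => absurd hk (Nat.not_lt_zero k), ?_⟩
      simp only [Function.iterate_zero, id] at hhit ⊢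
      rw [← hhit, Equiv.symm_apply_apply]
  | succ n =>
      have h0 : (e (Sum.inr b)).isLeft := hleft 0 (by omega)
      obtain ⟨a0, ha0⟩ := Sum.isLeft_iff.mp h0
      rw [ha0] at hhit hleft
      obtain ⟨hback, hbleft⟩ :=
        chainRevA e n a0 c (fun k hk => hleft k (by omega)) hhit
      constructor
      · intro k hk
        rcases Nat.lt_or_ge k n with h | h
        · exact hbleft k h
        · have hkn : k = n := by omega
          subst hkn
          rw [hback]
          rfl
      · rw [Function.iterate_succ_apply', hback]
        show e.symm (Sum.inl a0) = Sum.inr b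
        rw [← ha0, Equiv.symm_apply_apply]

/-- The ping-pong map. -/
noncomputable def png (e : A ⊕ B ≃ A ⊕ C)
    (hex : ∀ b : B, ∃ n : ℕ, ((stp e)^[n] (e (Sum.inr b))).isRight) (b : B) : C :=
  ((stp e)^[Nat.find (hex b)] (e (Sum.inr b))).getRight (Nat.find_spec (hex b))

theorem png_spec (e : A ⊕ B ≃ A ⊕ C)
    (hex : ∀ b : B, ∃ n : ℕ, ((stp e)^[n] (e (Sum.inr b))).isRight) (b : B) :
    (stp e)^[Nat.find (hex b)] (e (Sum.inr b)) = Sum.inr (png e hex b) :=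
  Sum.eq_right_getRight_of_isRight (Nat.find_spec (hex b))

theorem png_png (e : A ⊕ B ≃ A ⊕ C)
    (hex : ∀ b : B, ∃ n : ℕ, ((stp e)^[n] (e (Sum.inr b))).isRight)
    (hex' : ∀ c : C, ∃ n : ℕ, ((stp e.symm)^[n] (e.symm (Sum.inr c))).isRight)
    (b : B) : png e.symm hex' (png e hex b) = b := by
  set n := Nat.find (hex b) with hn
  set c := png e hex b with hc
  have hhit : (stp e)^[n] (e (Sum.inr b)) = Sum.inr c := png_spec e hex b
  have hleft : ∀ k, k < n → ((stp e)^[k] (e (Sum.inr b))).isLeft :=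
    fun k hk => Sum.not_isRight.mp (Nat.find_min (hex b) hk)
  obtain ⟨hbleft, hback⟩ := chainRev e n b c hleft hhit
  have hfind : Nat.find (hex' c) = n := by
    rw [Nat.find_eq_iff]
    exact ⟨by rw [hback]; rfl,
      fun m hm hr => by rw [← Sum.not_isLeft] at hr; exact hr (hbleft m hm)⟩
  have := png_spec e.symm hex' c
  rw [hfind, hback] at this
  exact (Sum.inr.inj this).symm

theorem png_act (e : A ⊕ B ≃ A ⊕ C)
    (he : ∀ (x : A ⊕ B) (s : S), e (RAct.act x s) = RAct.act (e x) s)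
    (hex : ∀ b : B, ∃ n : ℕ, ((stp e)^[n] (e (Sum.inr b))).isRight)
    (b : B) (s : S) : png e hex (RAct.act b s) = RAct.act (png e hex b) s := by
  have hbase : e (Sum.inr (RAct.act b s)) = RAct.act (e (Sum.inr b)) s := by
    rw [← act_inr (A := A), he]
  have hseq : ∀ k : ℕ, (stp e)^[k] (e (Sum.inr (RAct.act b s)))
      = RAct.act ((stp e)^[k] (e (Sum.inr b))) s := by
    intro k
    rw [hbase, stp_iter_act e he]
  have hfind : Nat.find (hex (RAct.act b s)) = Nat.find (hex b) := by
    rw [Nat.find_eq_iff]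
    constructor
    · rw [hseq, isRight_act]
      exact Nat.find_spec (hex b)
    · intro m hm hr
      rw [hseq, isRight_act] at hr
      exact Nat.find_min (hex b) hm hr
  have h1 := png_spec e hex (RAct.act b s)
  rw [hfind, hseq, png_spec e hex b] at h1
  rw [act_inr (A := A)] at h1
  exact (Sum.inr.inj h1).symm

end Pong
end CancelAux
/-- An `S`-act is cancellable iff it is internally cancellable. -/
theorem cancellable_iff_internallyCancellable (S : Type u) [Monoid S] (A : Type u)
    [RAct S A] [Nonempty A] :
    Cancellable S A ↔ InternallyCancellable S A := by
  classical
  constructor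
  · -- Cancellable → InternallyCancellable
    intro hCan C D E F hC hD hE hF hCD1 hCD2 hEF1 hEF2 hCE
    obtain ⟨g, hg⟩ := hCE
    letI iC := hC.ract
    letI iD := hD.ract
    letI iE := hE.ract
    letI iF := hF.ract
    haveI : Nonempty ↥D := hD.1.to_subtype
    haveI : Nonempty ↥F := hF.1.to_subtype
    have hmemD : ∀ a : A, a ∉ C → a ∈ D := by
      intro a ha
      have h : a ∈ C ∪ D := hCD1 ▸ Set.mem_univ a
      exact h.resolve_left ha
    have hmemF : ∀ a : A, a ∉ E → a ∈ F := by
      intro a ha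
      have h : a ∈ E ∪ F := hEF1 ▸ Set.mem_univ a
      exact h.resolve_left ha
    have hdisCD : ∀ a : A, a ∈ C → a ∈ D → False := by
      intro a h1 h2
      have h : a ∈ C ∩ D := ⟨h1, h2⟩
      rw [hCD2] at h
      exact h
    have hdisEF : ∀ a : A, a ∈ E → a ∈ F → False := by
      intro a h1 h2
      have h : a ∈ E ∩ F := ⟨h1, h2⟩
      rw [hEF2] at h
      exact h
    have hg' := CancelAux.symm_equivariant (S := S) g hg
    set to1 : A ⊕ ↥D → A ⊕ ↥F := Sum.elim
      (fun a => if h : a ∈ E then Sum.inl (g.symm ⟨a, h⟩).1 else Sum.inr ⟨a, hmemF a h⟩)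
      (fun d => Sum.inl d.1) with hto1
    set inv1 : A ⊕ ↥F → A ⊕ ↥D := Sum.elim
      (fun a => if h : a ∈ C then Sum.inl (g ⟨a, h⟩).1 else Sum.inr ⟨a, hmemD a h⟩)
      (fun f => Sum.inl f.1) with hinv1
    have hli : ∀ x, inv1 (to1 x) = x := by
      rintro (a | d)
      · by_cases h : a ∈ E
        · have h1 : to1 (Sum.inl a) = Sum.inl (g.symm ⟨a, h⟩).1 := by
            simp only [hto1, Sum.elim_inl, dif_pos h]
          rw [h1]
          have hc : (g.symm ⟨a, h⟩).1 ∈ C := (g.symm ⟨a, h⟩).2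
          have h2 : inv1 (Sum.inl (g.symm ⟨a, h⟩).1)
              = Sum.inl (g ⟨(g.symm ⟨a, h⟩).1, hc⟩).1 := by
            simp only [hinv1, Sum.elim_inl, dif_pos hc]
          rw [h2]
          have h3 : (⟨(g.symm ⟨a, h⟩).1, hc⟩ : ↥C) = g.symm ⟨a, h⟩ := rfl
          rw [h3, Equiv.apply_symm_apply]
        · have h1 : to1 (Sum.inl a) = Sum.inr ⟨a, hmemF a h⟩ := by
            simp only [hto1, Sum.elim_inl, dif_neg h]
          rw [h1]
          rfl
      · have h1 : to1 (Sum.inr d) = Sum.inl d.1 := rfl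
        rw [h1]
        have hnc : d.1 ∉ C := fun hc => hdisCD d.1 hc d.2
        have h2 : inv1 (Sum.inl d.1) = Sum.inr ⟨d.1, hmemD d.1 hnc⟩ := by
          simp only [hinv1, Sum.elim_inl, dif_neg hnc]
        rw [h2]
    have hri : ∀ x, to1 (inv1 x) = x := by
      rintro (a | f)
      · by_cases h : a ∈ C
        · have h1 : inv1 (Sum.inl a) = Sum.inl (g ⟨a, h⟩).1 := by
            simp only [hinv1, Sum.elim_inl, dif_pos h]
          rw [h1]
          have he : (g ⟨a, h⟩).1 ∈ E := (g ⟨a, h⟩).2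
          have h2 : to1 (Sum.inl (g ⟨a, h⟩).1)
              = Sum.inl (g.symm ⟨(g ⟨a, h⟩).1, he⟩).1 := by
            simp only [hto1, Sum.elim_inl, dif_pos he]
          rw [h2]
          have h3 : (⟨(g ⟨a, h⟩).1, he⟩ : ↥E) = g ⟨a, h⟩ := rfl
          rw [h3, Equiv.symm_apply_apply]
        · have h1 : inv1 (Sum.inl a) = Sum.inr ⟨a, hmemD a h⟩ := by
            simp only [hinv1, Sum.elim_inl, dif_neg h]
          rw [h1]
          rfl
      · have h1 : inv1 (Sum.inr f) = Sum.inl f.1 := rfl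
        rw [h1]
        have hne : f.1 ∉ E := fun hee => hdisEF f.1 hee f.2
        have h2 : to1 (Sum.inl f.1) = Sum.inr ⟨f.1, hmemF f.1 hne⟩ := by
          simp only [hto1, Sum.elim_inl, dif_neg hne]
        rw [h2]
    have hequi : ∀ (x : A ⊕ ↥D) (s : S), to1 (RAct.act x s) = RAct.act (to1 x) s := by
      rintro (a | d) s
      · rw [CancelAux.act_inl]
        by_cases h : a ∈ E
        · have hs : RAct.act a s ∈ E := hE.2 a h s
          have h1 : to1 (Sum.inl (RAct.act a s)) = Sum.inl (g.symm ⟨RAct.act a s, hs⟩).1 := by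
            simp only [hto1, Sum.elim_inl, dif_pos hs]
          have h2 : to1 (Sum.inl a) = Sum.inl (g.symm ⟨a, h⟩).1 := by
            simp only [hto1, Sum.elim_inl, dif_pos h]
          rw [h1, h2, CancelAux.act_inl]
          apply congrArg Sum.inl
          exact congrArg Subtype.val (hg' ⟨a, h⟩ s)
        · have haF : a ∈ F := hmemF a h
          have hs : RAct.act a s ∉ E := fun hc => hdisEF _ hc (hF.2 a haF s)
          have h1 : to1 (Sum.inl (RAct.act a s)) = Sum.inr ⟨RAct.act a s, hmemF _ hs⟩ := by
            simp only [hto1, Sum.elim_inl, dif_neg hs]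
          have h2 : to1 (Sum.inl a) = Sum.inr ⟨a, hmemF a h⟩ := by
            simp only [hto1, Sum.elim_inl, dif_neg h]
          rw [h1, h2, CancelAux.act_inr]
          exact congrArg Sum.inr (Subtype.ext rfl)
      · rw [CancelAux.act_inr]
        have h1 : to1 (Sum.inr (RAct.act d s)) = Sum.inl (RAct.act d s).1 := rfl
        have h2 : to1 (Sum.inr d) = Sum.inl d.1 := rfl
        rw [h1, h2, CancelAux.act_inl]
        rfl
    exact hCan ↥D ↥F ⟨⟨to1, inv1, hli, hri⟩, hequi⟩
  · -- InternallyCancellable → Cancellable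
    intro hIC B C _ _ _ _ hiso
    obtain ⟨e, he⟩ := hiso
    have he' := CancelAux.symm_equivariant (S := S) e he
    have hex : ∀ b : B, ∃ n : ℕ, ((CancelAux.stp e)^[n] (e (Sum.inr b))).isRight := by
      intro b
      rcases heb : e (Sum.inr b) with a | c
      · by_contra hcon
        push_neg at hcon
        apply CancelAux.no_escape hIC e he b a heb
        intro n
        exact Sum.not_isRight.mp (by simpa using hcon n)
      · exact ⟨0, by simp [heb]⟩
    have hex' : ∀ c : C, ∃ n : ℕ,
        ((CancelAux.stp e.symm)^[n] (e.symm (Sum.inr c))).isRight := by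
      intro c
      rcases hec : e.symm (Sum.inr c) with a | b
      · by_contra hcon
        push_neg at hcon
        apply CancelAux.no_escape hIC e.symm he' c a hec
        intro n
        exact Sum.not_isRight.mp (by simpa using hcon n)
      · exact ⟨0, by simp [hec]⟩
    exact ⟨⟨CancelAux.png e hex, CancelAux.png e.symm hex',
      CancelAux.png_png e hex hex', fun c => CancelAux.png_png e.symm hex' hex c⟩,
      CancelAux.png_act e he hex⟩
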